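/- For all real x, -log(1+exp(x)) = max over t in ℝ of (A(t)·x² - x/2 + C(t)), where A(t) = -tanh(t/2)/(4t) (extended by A(0) = -1/8) and C(t) = t/2 - log(1+exp(t)) + t·tanh(t/2)/4; moreover the maximum is attained at t = x. -/

import Mathlib

open Real Set

noncomputable def Ajj (t : ℝ) : ℝ := if t = 0 then -1/8 else -(Real.tanh (t/2))/(4*t)

noncomputable def Cjj (t : ℝ) : ℝ :=
  t/2 - Real.log (1 + Real.exp t) + t * Real.tanh (t/2) / 4

lemma tanh_hasDeriv (x : ℝ) : HasDerivAt Real.tanh (1 - Real.tanh x ^ 2) x := by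
  have h := (Real.hasDerivAt_sinh x).div (Real.hasDerivAt_cosh x) (Real.cosh_pos x).ne'
  have e : Real.tanh = fun y => Real.sinh y / Real.cosh y :=
    funext fun y => Real.tanh_eq_sinh_div_cosh y
  rw [e]
  refine h.congr_deriv ?_
  have h2 := Real.cosh_sq_sub_sinh_sq x
  have hc := (Real.cosh_pos x).ne'
  field_simp

lemma tanh_sq_lt_one (x : ℝ) : Real.tanh x ^ 2 < 1 := by
  rw [Real.tanh_eq_sinh_div_cosh, div_pow]
  rw [div_lt_one (by positivity)]
  nlinarith [Real.cosh_sq_sub_sinh_sq x]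

lemma tanh_strictMono : StrictMono Real.tanh := by
  apply strictMono_of_deriv_pos
  intro x
  rw [(tanh_hasDeriv x).deriv]
  linarith [_root_.tanh_sq_lt_one x]

lemma tanh_nonneg' {x : ℝ} (hx : 0 ≤ x) : 0 ≤ Real.tanh x := by
  have := tanh_strictMono.monotone hx
  simpa [Real.tanh_zero] using this

lemma tanh_concaveOn : ConcaveOn ℝ (Set.Ici (0:ℝ)) Real.tanh := by
  apply AntitoneOn.concaveOn_of_deriv (convex_Ici 0)
  · exact (Differentiable.continuous (fun x => (tanh_hasDeriv x).differentiableAt)).continuousOn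
  · exact fun x _ => (tanh_hasDeriv x).differentiableAt.differentiableWithinAt
  · intro a ha b hb hab
    rw [interior_Ici] at ha hb
    rw [(tanh_hasDeriv a).deriv, (tanh_hasDeriv b).deriv]
    have h1 : 0 ≤ Real.tanh a := tanh_nonneg' ha.le
    have h2 : Real.tanh a ≤ Real.tanh b := tanh_strictMono.monotone hab
    nlinarith

lemma tanh_mul_le {u a : ℝ} (hu : 0 ≤ u) (hua : u ≤ a) :
    u * Real.tanh a ≤ a * Real.tanh u := by
  rcases eq_or_lt_of_le (hu.trans hua) with h | ha
  · have hu0 : u = 0 := le_antisymm (h ▸ hua) hu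
    simp [← h, hu0]
  · have hw1 : (0:ℝ) ≤ 1 - u/a := by
      rw [sub_nonneg]; exact div_le_one_of_le₀ hua ha.le
    have hw2 : (0:ℝ) ≤ u/a := by positivity
    have hw3 : (1 - u/a) + u/a = 1 := by ring
    have h := tanh_concaveOn.2 (Set.self_mem_Ici) (Set.mem_Ici.2 (hu.trans hua)) hw1 hw2 hw3
    have hsum : (1 - u/a) • (0:ℝ) + (u/a) • a = u := by
      simp only [smul_eq_mul, mul_zero, zero_add]; field_simp
    rw [hsum] at h
    simp only [smul_eq_mul, Real.tanh_zero, mul_zero, zero_add] at h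
    rw [div_mul_eq_mul_div, div_le_iff₀ ha] at h
    linarith

lemma tanh_le_self' {u : ℝ} (hu : 0 ≤ u) : Real.tanh u ≤ u := by
  have hf : ∀ x : ℝ, HasDerivAt (fun y => y - Real.tanh y) (Real.tanh x ^ 2) x := by
    intro x
    have h := (hasDerivAt_id x).sub (tanh_hasDeriv x)
    refine h.congr_deriv ?_; ring
  have hm : Monotone (fun y => y - Real.tanh y) :=
    monotone_of_deriv_nonneg (fun x => (hf x).differentiableAt)
      (fun x => by rw [(hf x).deriv]; positivity)
  have h0 := hm hu
  simp only [Real.tanh_zero, sub_zero] at h0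
  linarith

lemma logcosh_hasDeriv (x : ℝ) : HasDerivAt (fun y => Real.log (Real.cosh y)) (Real.tanh x) x := by
  have h := (Real.hasDerivAt_cosh x).log (Real.cosh_pos x).ne'
  simpa [Real.tanh_eq_sinh_div_cosh] using h

lemma core0 {u : ℝ} (hu : 0 ≤ u) : Real.log (Real.cosh u) ≤ u^2/2 := by
  have hf : ∀ x : ℝ, HasDerivAt (fun y : ℝ => y^2/2 - Real.log (Real.cosh y))
      (x - Real.tanh x) x := by
    intro x
    have h1 : HasDerivAt (fun y : ℝ => y^2/2) x x := by
      simpa using (hasDerivAt_pow 2 x).div_const 2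
    exact h1.sub (logcosh_hasDeriv x)
  have hm : MonotoneOn (fun y : ℝ => y^2/2 - Real.log (Real.cosh y)) (Set.Ici 0) := by
    apply monotoneOn_of_deriv_nonneg (convex_Ici 0)
      ((Differentiable.continuous fun x => (hf x).differentiableAt).continuousOn)
      (fun x _ => (hf x).differentiableAt.differentiableWithinAt)
    intro x hx
    rw [interior_Ici] at hx
    rw [(hf x).deriv]
    have := tanh_le_self' hx.le
    linarith
  have h0 := hm Set.self_mem_Ici (Set.mem_Ici.2 hu) hu
  simp only [Real.cosh_zero, Real.log_one] at h0
  norm_num at h0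
  linarith

lemma core {a u : ℝ} (ha : 0 < a) (hu : 0 ≤ u) :
    Real.log (Real.cosh u) ≤
      Real.log (Real.cosh a) + Real.tanh a / (2*a) * (u^2 - a^2) := by
  set c := Real.tanh a / (2*a) with hc
  have hgd : ∀ x : ℝ, HasDerivAt (fun y : ℝ => c * y^2 - Real.log (Real.cosh y))
      (c * (2*x) - Real.tanh x) x := by
    intro x
    have h1 : HasDerivAt (fun y : ℝ => c * y^2) (c * (2*x)) x := by
      have := (hasDerivAt_pow 2 x).const_mul c
      refine this.congr_deriv ?_; ring_nf
    exact h1.sub (logcosh_hasDeriv x)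
  have hdiff : Differentiable ℝ fun y : ℝ => c * y^2 - Real.log (Real.cosh y) :=
    fun x => (hgd x).differentiableAt
  have key : c * a^2 - Real.log (Real.cosh a) ≤ c * u^2 - Real.log (Real.cosh u) := by
    rcases le_total u a with h | h
    · have hanti : AntitoneOn (fun y : ℝ => c * y^2 - Real.log (Real.cosh y)) (Set.Icc 0 a) := by
        apply antitoneOn_of_deriv_nonpos (convex_Icc 0 a) hdiff.continuous.continuousOn
          (fun x _ => (hgd x).differentiableAt.differentiableWithinAt)
        intro x hx
        rw [interior_Icc] at hx
        rw [(hgd x).deriv]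
        have hmul := tanh_mul_le hx.1.le hx.2.le
        have h2 : Real.tanh a * x / a ≤ Real.tanh x := by
          rw [div_le_iff₀ ha]; nlinarith
        have h3 : c * (2*x) = Real.tanh a * x / a := by
          rw [hc]; field_simp
        linarith
      exact hanti (Set.mem_Icc.2 ⟨hu, h⟩) (Set.mem_Icc.2 ⟨ha.le, le_refl a⟩) h
    · have hmono : MonotoneOn (fun y : ℝ => c * y^2 - Real.log (Real.cosh y)) (Set.Ici a) := by
        apply monotoneOn_of_deriv_nonneg (convex_Ici a) hdiff.continuous.continuousOn
          (fun x _ => (hgd x).differentiableAt.differentiableWithinAt)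
        intro x hx
        rw [interior_Ici] at hx
        rw [(hgd x).deriv]
        have hmul := tanh_mul_le ha.le hx.le
        have h2 : Real.tanh x ≤ Real.tanh a * x / a := by
          rw [le_div_iff₀ ha]; nlinarith
        have h3 : c * (2*x) = Real.tanh a * x / a := by
          rw [hc]; field_simp
        linarith
      exact hmono (Set.self_mem_Ici) (Set.mem_Ici.2 h) h
  have e : c * (u^2 - a^2) = c * u^2 - c * a^2 := by ring
  linarith

lemma log_one_add_exp (x : ℝ) :
    Real.log (1 + Real.exp x) = x/2 + Real.log 2 + Real.log (Real.cosh (x/2)) := by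
  have e1 : Real.exp (x/2) * Real.exp (x/2) = Real.exp x := by
    rw [← Real.exp_add]; norm_num
  have e2 : Real.exp (x/2) * Real.exp (-(x/2)) = 1 := by
    rw [← Real.exp_add]; simp
  have h : (1:ℝ) + Real.exp x = Real.exp (x/2) * (2 * Real.cosh (x/2)) := by
    rw [Real.cosh_eq]
    linear_combination -e1 - e2
  rw [h, Real.log_mul (Real.exp_ne_zero _)
      (by positivity : (0:ℝ) < 2 * Real.cosh (x/2)).ne', Real.log_exp,
    Real.log_mul two_ne_zero (Real.cosh_pos _).ne']
  ring

lemma Cjj_eq (t : ℝ) :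
    Cjj t = -Real.log 2 - Real.log (Real.cosh (t/2)) + t * Real.tanh (t/2) / 4 := by
  rw [Cjj, log_one_add_exp]; ring

lemma key_half {t : ℝ} (x : ℝ) (ht : 0 < t) (hx : 0 ≤ x) :
    Real.log (Real.cosh (x/2)) ≤
      Real.log (Real.cosh (t/2)) + Real.tanh (t/2)/(4*t) * (x^2 - t^2) := by
  have h := core (a := t/2) (u := x/2) (by linarith) (by linarith)
  have ht' : t ≠ 0 := ht.ne'
  have e : Real.tanh (t/2)/(2*(t/2)) * ((x/2)^2 - (t/2)^2)
      = Real.tanh (t/2)/(4*t) * (x^2 - t^2) := by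
    rw [show 2*(t/2) = t by ring, div_mul_eq_mul_div, div_mul_eq_mul_div,
      div_eq_div_iff ht' (by positivity : (0:ℝ) < 4*t).ne']
    ring
  linarith

lemma key2 (t x : ℝ) (ht : t ≠ 0) :
    Real.log (Real.cosh (x/2)) ≤
      Real.log (Real.cosh (t/2)) + Real.tanh (t/2)/(4*t) * (x^2 - t^2) := by
  have hx2 : Real.log (Real.cosh (x/2)) = Real.log (Real.cosh (|x|/2)) := by
    rw [show |x|/2 = |x/2| by rw [abs_div]; norm_num, Real.cosh_abs]
  have hxsq : |x|^2 = x^2 := sq_abs x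
  rcases ht.lt_or_gt with h | h
  · have hk := key_half (t := -t) |x| (by linarith) (abs_nonneg x)
    rw [hx2, hxsq.symm]
    have e1 : Real.cosh ((-t)/2) = Real.cosh (t/2) := by
      rw [neg_div, Real.cosh_neg]
    have e2 : Real.tanh ((-t)/2)/(4*(-t)) * (|x|^2 - (-t)^2)
        = Real.tanh (t/2)/(4*t) * (|x|^2 - t^2) := by
      rw [neg_div, Real.tanh_neg]; ring
    rw [e1, e2] at hk
    exact hk
  · have hk := key_half (t := t) |x| h (abs_nonneg x)
    rw [hx2, hxsq.symm]
    exact hk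

lemma key_le (t x : ℝ) : Ajj t * x^2 - x/2 + Cjj t ≤ -Real.log (1 + Real.exp x) := by
  rw [log_one_add_exp, Cjj_eq]
  by_cases ht : t = 0
  · subst ht
    simp only [Ajj, if_pos rfl]
    norm_num
    have hx2 : Real.log (Real.cosh (x/2)) = Real.log (Real.cosh (|x|/2)) := by
      rw [show |x|/2 = |x/2| by rw [abs_div]; norm_num, Real.cosh_abs]
    have h := core0 (u := |x|/2) (by positivity)
    have e : (|x|/2)^2/2 = x^2/8 := by rw [div_pow, sq_abs]; ring
    rw [e] at h
    rw [hx2]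
    linarith
  · have hA : Ajj t = -(Real.tanh (t/2))/(4*t) := if_neg ht
    have e : Real.tanh (t/2)/(4*t) * (x^2 - t^2)
        = -(Ajj t * x^2) - t * Real.tanh (t/2)/4 := by
      rw [hA]; field_simp
    have h := key2 t x ht
    linarith

lemma key_eq (x : ℝ) : Ajj x * x^2 - x/2 + Cjj x = -Real.log (1 + Real.exp x) := by
  by_cases hx : x = 0
  · subst hx
    simp [Ajj, Cjj]
  · have hA : Ajj x = -(Real.tanh (x/2))/(4*x) := if_neg hx
    have e : Ajj x * x^2 = -(x * Real.tanh (x/2))/4 := by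
      rw [hA]; field_simp
    rw [Cjj, e]; ring

theorem stmt0 (x : ℝ) :
    IsGreatest {y : ℝ | ∃ t : ℝ, y = Ajj t * x^2 - x/2 + Cjj t}
      (-Real.log (1 + Real.exp x)) ∧
    Ajj x * x^2 - x/2 + Cjj x = -Real.log (1 + Real.exp x) := by
  refine ⟨⟨⟨x, (key_eq x).symm⟩, ?_⟩, key_eq x⟩
  rintro y ⟨t, rfl⟩
  exact key_le t x
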